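/- Let m ≥ 9 with m ≠ 10, 15, let T ∈ ℂ^m ⊗ ℂ^m ⊗ ℂ^m be any concise tensor, and set r = 2m, k = ⌊√m⌋, t = k + ⌈(m−k²)/2⌉, t' = k + ⌊(m−k²)/2⌋. Define E'_{110} = ⟨a_1,…,a_k⟩⊗⟨b_1,…,b_k⟩ + ⟨a_{k+1},…,a_{t'}⟩⊗b_1 + a_1⊗⟨b_{k+1},…,b_t⟩ (and symmetrically for the other pairs of factors). Then: (i) dim((E_{110} ⊗ A) ∩ (S²A ⊗ B)) ≥ C(k+1,2)·k + (t'−k)·k + C(t'−k+1,2) + (t−k), and this quantity is at least 2m; (ii) the triple intersection (E_{110}⊗C) ∩ (E_{101}⊗B) ∩ (E_{011}⊗A) contains ⟨a_1,…,a_k⟩⊗⟨b_1,…,b_k⟩⊗⟨c_1,…,c_k⟩ ⊕ ⟨T⟩, of dimension k³ + 1 ≥ 2m. -/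

import Mathlib

open scoped BigOperators

/-- The standard basis vector `e_j` of `ℂᵐ`. -/
def stdVec {m : ℕ} (j : Fin m) : Fin m → ℂ := fun i => if i = j then 1 else 0

/-- The subspace `E'_{110} = ⟨a_1,…,a_k⟩⊗⟨b_1,…,b_k⟩ + ⟨a_{k+1},…,a_{t'}⟩⊗b_1 +
a_1⊗⟨b_{k+1},…,b_t⟩` of `A ⊗ B` (with the basis indexed `1,…,m` realized as indices
`0,…,m−1`, so `a_1 ↦ e_0`, etc.). -/
noncomputable def Eprime (m k t t' : ℕ) : Submodule ℂ (Fin m → Fin m → ℂ) :=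
  Submodule.span ℂ
    ({M | ∃ i j : Fin m, (i : ℕ) < k ∧ (j : ℕ) < k ∧
        M = fun x y => stdVec i x * stdVec j y} ∪
     {M | ∃ i : Fin m, k ≤ (i : ℕ) ∧ (i : ℕ) < t' ∧
        M = fun (x y : Fin m) => stdVec i x * (if (y : ℕ) = 0 then 1 else 0)} ∪
     {M | ∃ j : Fin m, k ≤ (j : ℕ) ∧ (j : ℕ) < t ∧
        M = fun (x y : Fin m) => (if (x : ℕ) = 0 then 1 else 0) * stdVec j y})

/-- The image `T(C*) ⊆ A ⊗ B` of the flattening of a tensor contracted in its third factor. -/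
noncomputable def imageThird {m : ℕ} (T : Fin m → Fin m → Fin m → ℂ) :
    Submodule ℂ (Fin m → Fin m → ℂ) :=
  Submodule.span ℂ {M | ∃ γ : Fin m → ℂ, M = fun x y => ∑ l, γ l * T x y l}

/-- The image `T(B*) ⊆ A ⊗ C`. -/
noncomputable def imageSecond {m : ℕ} (T : Fin m → Fin m → Fin m → ℂ) :
    Submodule ℂ (Fin m → Fin m → ℂ) :=
  Submodule.span ℂ {M | ∃ β : Fin m → ℂ, M = fun x z => ∑ j, β j * T x j z}

/-- The image `T(A*) ⊆ B ⊗ C`. -/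
noncomputable def imageFirst {m : ℕ} (T : Fin m → Fin m → Fin m → ℂ) :
    Submodule ℂ (Fin m → Fin m → ℂ) :=
  Submodule.span ℂ {M | ∃ α : Fin m → ℂ, M = fun y z => ∑ i, α i * T i y z}

/-- The skew-symmetrization map on `A ⊗ A ⊗ B`; its kernel is `S²A ⊗ B`. -/
noncomputable def skewSym {m : ℕ} :
    (Fin m → Fin m → Fin m → ℂ) →ₗ[ℂ] (Fin m → Fin m → Fin m → ℂ) where
  toFun U := fun i₁ i₂ j => U i₁ i₂ j - U i₂ i₁ j
  map_add' := by
    intro U V; funext i₁ i₂ j; simp; ring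
  map_smul' := by
    intro c U; funext i₁ i₂ j; simp; ring

/-- `E ⊗ C ⊆ A ⊗ B ⊗ C` for a subspace `E ⊆ A ⊗ B`: the span of elements `M ⊗ w`. -/
noncomputable def tensorThird {m : ℕ} (E : Submodule ℂ (Fin m → Fin m → ℂ)) :
    Submodule ℂ (Fin m → Fin m → Fin m → ℂ) :=
  Submodule.span ℂ {U | ∃ M ∈ E, ∃ w : Fin m → ℂ, U = fun i j l => M i j * w l}

/-- `E ⊗ B ⊆ A ⊗ B ⊗ C` (in the middle factor) for a subspace `E ⊆ A ⊗ C`. -/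
noncomputable def tensorSecond {m : ℕ} (E : Submodule ℂ (Fin m → Fin m → ℂ)) :
    Submodule ℂ (Fin m → Fin m → Fin m → ℂ) :=
  Submodule.span ℂ {U | ∃ M ∈ E, ∃ w : Fin m → ℂ, U = fun i j l => M i l * w j}

/-- `E ⊗ A ⊆ A ⊗ B ⊗ C` (in the first factor) for a subspace `E ⊆ B ⊗ C`. -/
noncomputable def tensorFirst {m : ℕ} (E : Submodule ℂ (Fin m → Fin m → ℂ)) :
    Submodule ℂ (Fin m → Fin m → Fin m → ℂ) :=
  Submodule.span ℂ {U | ∃ M ∈ E, ∃ w : Fin m → ℂ, U = fun i j l => w i * M j l}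

/-- `A ⊗ E ⊆ A ⊗ A ⊗ B` for a subspace `E ⊆ A ⊗ B`. -/
noncomputable def leftTensor {m : ℕ} (E : Submodule ℂ (Fin m → Fin m → ℂ)) :
    Submodule ℂ (Fin m → Fin m → Fin m → ℂ) :=
  Submodule.span ℂ {U | ∃ v : Fin m → ℂ, ∃ M ∈ E, U = fun i₁ i₂ j => v i₁ * M i₂ j}

namespace DegAux

def pairEquiv (n : ℕ) : {p : Fin n × Fin n // p.1 ≤ p.2} ≃ Σ j : Fin n, Fin (j.val + 1) where
  toFun q := ⟨q.1.2, ⟨q.1.1.val, by have := q.2; omega⟩⟩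
  invFun s := ⟨(⟨s.2.val, by have := s.2.isLt; have := s.1.isLt; omega⟩, s.1),
    by have := s.2.isLt; simp only [Fin.le_def]; omega⟩
  left_inv q := rfl
  right_inv s := rfl

lemma card_pairs (n : ℕ) : Fintype.card {p : Fin n × Fin n // p.1 ≤ p.2} = (n+1).choose 2 := by
  rw [Fintype.card_congr (pairEquiv n), Fintype.card_sigma]
  simp only [Fintype.card_fin]
  rw [Fin.sum_univ_eq_sum_range (fun i => i + 1) n]
  have h1 : (∑ i ∈ Finset.range (n+1), i) * 2 = (n+1) * n := by
    simpa using Finset.sum_range_id_mul_two (n+1)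
  have h2 : ∑ i ∈ Finset.range (n+1), i = ∑ i ∈ Finset.range n, (i+1) := by
    rw [Finset.sum_range_succ' (fun i => i) n]; simp
  have h3 : (n+1).choose 2 = (n+1) * n / 2 := by
    rw [Nat.choose_two_right]; simp
  omega

lemma two_mul_choose_two (n : ℕ) : 2 * ((n+1).choose 2) = (n+1) * n := by
  have h1 : (∑ i ∈ Finset.range (n+1), i) * 2 = (n+1) * n := by
    simpa using Finset.sum_range_id_mul_two (n+1)
  have h3 : (n+1).choose 2 = (n+1) * n / 2 := by
    rw [Nat.choose_two_right]; simp
  omega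

noncomputable def symEl {m : ℕ} (p : Fin m × Fin m × Fin m) : Fin m → Fin m → Fin m → ℂ :=
  (fun x y z => stdVec p.1 x * (stdVec p.2.1 y * stdVec p.2.2 z)) +
  (fun x y z => stdVec p.2.1 x * (stdVec p.1 y * stdVec p.2.2 z))

lemma symEl_li {m : ℕ} {ι : Type*} [Fintype ι] [DecidableEq ι]
    (φ : ι → Fin m × Fin m × Fin m) (hφ : Function.Injective φ)
    (hle : ∀ p, ((φ p).1 : ℕ) ≤ ((φ p).2.1 : ℕ)) :
    LinearIndependent ℂ (fun p => symEl (φ p)) := by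
  rw [Fintype.linearIndependent_iff]
  intro g hg p0
  have h := congrFun (congrFun (congrFun hg (φ p0).1) (φ p0).2.1) (φ p0).2.2
  simp only [Finset.sum_apply, Pi.smul_apply, smul_eq_mul, Pi.zero_apply, symEl,
    Pi.add_apply] at h
  have hz : ∀ p ∈ Finset.univ, p ≠ p0 →
      g p * (stdVec (φ p).1 (φ p0).1 *
          (stdVec (φ p).2.1 (φ p0).2.1 * stdVec (φ p).2.2 (φ p0).2.2) +
        stdVec (φ p).2.1 (φ p0).1 *
          (stdVec (φ p).1 (φ p0).2.1 * stdVec (φ p).2.2 (φ p0).2.2)) = 0 := by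
    intro p _ hp
    have hne : φ p ≠ φ p0 := fun h => hp (hφ h)
    have h1 : ¬((φ p0).1 = (φ p).1 ∧ (φ p0).2.1 = (φ p).2.1 ∧ (φ p0).2.2 = (φ p).2.2) := by
      rintro ⟨a, b, c⟩
      exact hne (Prod.ext a.symm (Prod.ext b.symm c.symm))
    have h2 : ¬((φ p0).1 = (φ p).2.1 ∧ (φ p0).2.1 = (φ p).1 ∧ (φ p0).2.2 = (φ p).2.2) := by
      rintro ⟨a, b, c⟩
      have l1 := hle p; have l2 := hle p0
      rw [a, b] at l2
      have e1 : (φ p).1 = (φ p).2.1 := by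
        have : ((φ p).1 : ℕ) = ((φ p).2.1 : ℕ) := by omega
        exact Fin.ext this
      apply hne
      refine Prod.ext ?_ (Prod.ext ?_ c.symm)
      · rw [← e1] at a; exact a.symm
      · rw [e1] at b; exact b.symm
    apply mul_eq_zero_of_right
    have z1 : stdVec (φ p).1 (φ p0).1 *
        (stdVec (φ p).2.1 (φ p0).2.1 * stdVec (φ p).2.2 (φ p0).2.2) = 0 := by
      by_cases a : (φ p0).1 = (φ p).1
      · by_cases b : (φ p0).2.1 = (φ p).2.1
        · by_cases c : (φ p0).2.2 = (φ p).2.2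
          · exact absurd ⟨a, b, c⟩ h1
          · simp [stdVec, c]
        · simp [stdVec, b]
      · simp [stdVec, a]
    have z2 : stdVec (φ p).2.1 (φ p0).1 *
        (stdVec (φ p).1 (φ p0).2.1 * stdVec (φ p).2.2 (φ p0).2.2) = 0 := by
      by_cases a : (φ p0).1 = (φ p).2.1
      · by_cases b : (φ p0).2.1 = (φ p).1
        · by_cases c : (φ p0).2.2 = (φ p).2.2
          · exact absurd ⟨a, b, c⟩ h2
          · simp [stdVec, c]
        · simp [stdVec, b]
      · simp [stdVec, a]
    rw [z1, z2, add_zero]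
  rw [Finset.sum_eq_single_of_mem p0 (Finset.mem_univ p0) hz] at h
  have e0 : ∀ a : Fin m, stdVec a a = (1 : ℂ) := fun a => by simp [stdVec]
  rcases mul_eq_zero.mp h with h' | h'
  · exact h'
  · exfalso
    simp only [e0, stdVec] at h'
    split_ifs at h' <;> norm_num at h'

lemma card_le_finrank {ι V : Type*} [Fintype ι] [AddCommGroup V] [Module ℂ V]
    [Module.Finite ℂ V] {S : Submodule ℂ V} {v : ι → V}
    (li : LinearIndependent ℂ v) (hv : ∀ p, v p ∈ S) :
    Fintype.card ι ≤ Module.finrank ℂ S := by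
  have li' : LinearIndependent ℂ (fun p => (⟨v p, hv p⟩ : S)) :=
    LinearIndependent.of_comp S.subtype (by exact li)
  exact li'.fintype_card_le_finrank

lemma mem_Eprime {m k t t' : ℕ} {j l : Fin m}
    (h : ((j : ℕ) < k ∧ (l : ℕ) < k) ∨ (k ≤ (j : ℕ) ∧ (j : ℕ) < t' ∧ (l : ℕ) = 0) ∨
      ((j : ℕ) = 0 ∧ k ≤ (l : ℕ) ∧ (l : ℕ) < t)) :
    (fun y z => stdVec j y * stdVec l z) ∈ Eprime m k t t' := by
  apply Submodule.subset_span
  rcases h with ⟨h1, h2⟩ | ⟨h1, h2, h3⟩ | ⟨h1, h2, h3⟩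
  · exact Or.inl (Or.inl ⟨j, l, h1, h2, rfl⟩)
  · refine Or.inl (Or.inr ⟨j, h1, h2, ?_⟩)
    funext y z
    congr 1
    simp only [stdVec]
    refine if_congr ?_ rfl rfl
    rw [Fin.ext_iff, h3]
  · refine Or.inr ⟨l, h2, h3, ?_⟩
    funext y z
    congr 1
    simp only [stdVec]
    refine if_congr ?_ rfl rfl
    rw [Fin.ext_iff, h1]

lemma symEl_mem_ker {m : ℕ} (p : Fin m × Fin m × Fin m) :
    symEl p ∈ LinearMap.ker (skewSym (m := m)) := by
  rw [LinearMap.mem_ker]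
  funext x y z
  simp only [skewSym, LinearMap.coe_mk, AddHom.coe_mk, symEl, Pi.add_apply, Pi.zero_apply]
  ring

lemma symEl_mem_leftTensor {m : ℕ} {E : Submodule ℂ (Fin m → Fin m → ℂ)}
    {p : Fin m × Fin m × Fin m}
    (h1 : (fun y z => stdVec p.2.1 y * stdVec p.2.2 z) ∈ E)
    (h2 : (fun y z => stdVec p.1 y * stdVec p.2.2 z) ∈ E) :
    symEl p ∈ leftTensor E := by
  refine Submodule.add_mem _ ?_ ?_
  · exact Submodule.subset_span ⟨stdVec p.1, _, h1, rfl⟩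
  · exact Submodule.subset_span ⟨stdVec p.2.1, _, h2, rfl⟩


lemma part3 {m k t t' : ℕ} (hk0 : 0 < k) (T : Fin m → Fin m → Fin m → ℂ) :
    Submodule.span ℂ
        ({U | ∃ i j l : Fin m, (i : ℕ) < k ∧ (j : ℕ) < k ∧ (l : ℕ) < k ∧
            U = fun x y z => stdVec i x * stdVec j y * stdVec l z} ∪ {T}) ≤
      tensorThird (imageThird T ⊔ Eprime m k t t') ⊓
        tensorSecond (imageSecond T ⊔ Eprime m k t t') ⊓
        tensorFirst (imageFirst T ⊔ Eprime m k t t') := by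
  rw [Submodule.span_le]
  rintro U (⟨i, j, l, hi, hj, hl, rfl⟩ | rfl)
  · refine Submodule.mem_inf.mpr ⟨Submodule.mem_inf.mpr ⟨?_, ?_⟩, ?_⟩
    · exact Submodule.subset_span ⟨_,
        Submodule.mem_sup_right (Submodule.subset_span
          (Or.inl (Or.inl ⟨i, j, hi, hj, rfl⟩))), stdVec l, rfl⟩
    · refine Submodule.subset_span ⟨_,
        Submodule.mem_sup_right (Submodule.subset_span
          (Or.inl (Or.inl ⟨i, l, hi, hl, rfl⟩))), stdVec j, ?_⟩
      funext x y z; ring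
    · refine Submodule.subset_span ⟨_,
        Submodule.mem_sup_right (Submodule.subset_span
          (Or.inl (Or.inl ⟨j, l, hj, hl, rfl⟩))), stdVec i, ?_⟩
      funext x y z; ring
  · refine Submodule.mem_inf.mpr ⟨Submodule.mem_inf.mpr ⟨?_, ?_⟩, ?_⟩
    · have hdec : U = ∑ l0 : Fin m, (fun x y z => U x y l0 * stdVec l0 z) := by
        funext x y z
        simp only [Finset.sum_apply, stdVec, mul_ite, mul_one, mul_zero]
        simp [Finset.sum_ite_eq]
      rw [hdec]
      refine Submodule.sum_mem _ fun l0 _ => Submodule.subset_span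
        ⟨fun x y => U x y l0, Submodule.mem_sup_left (Submodule.subset_span ⟨stdVec l0, ?_⟩),
          stdVec l0, rfl⟩
      funext x y
      simp [stdVec, ite_mul]
    · have hdec : U = ∑ j0 : Fin m, (fun x y z => U x j0 z * stdVec j0 y) := by
        funext x y z
        simp only [Finset.sum_apply, stdVec, mul_ite, mul_one, mul_zero]
        simp [Finset.sum_ite_eq]
      rw [hdec]
      refine Submodule.sum_mem _ fun j0 _ => Submodule.subset_span
        ⟨fun x z => U x j0 z, Submodule.mem_sup_left (Submodule.subset_span ⟨stdVec j0, ?_⟩),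
          stdVec j0, rfl⟩
      funext x z
      simp [stdVec, ite_mul]
    · have hdec : U = ∑ i0 : Fin m, (fun x y z => stdVec i0 x * U i0 y z) := by
        funext x y z
        simp only [Finset.sum_apply, stdVec, ite_mul, one_mul, zero_mul]
        simp [Finset.sum_ite_eq]
      rw [hdec]
      refine Submodule.sum_mem _ fun i0 _ => Submodule.subset_span
        ⟨fun y z => U i0 y z, Submodule.mem_sup_left (Submodule.subset_span ⟨stdVec i0, ?_⟩),
          stdVec i0, rfl⟩
      funext y z
      simp [stdVec, ite_mul]


def wfam {m k : ℕ} (hkm' : k ≤ m) (T : Fin m → Fin m → Fin m → ℂ) :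
    (Fin k × Fin k × Fin k) ⊕ Unit → (Fin m → Fin m → Fin m → ℂ)
  | .inl q => fun x y z => stdVec (Fin.castLE hkm' q.1) x * stdVec (Fin.castLE hkm' q.2.1) y *
      stdVec (Fin.castLE hkm' q.2.2) z
  | .inr _ => T

lemma wfam_li {m k : ℕ} (hkm : k < m) (T : Fin m → Fin m → Fin m → ℂ)
    (hA : Function.Injective fun (α : Fin m → ℂ) (j l : Fin m) => ∑ i, α i * T i j l) :
    LinearIndependent ℂ (wfam hkm.le T) := by
  classical
  have e0 : ∀ a : Fin m, stdVec a a = (1 : ℂ) := fun a => by simp [stdVec]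
  have hzk : ∀ q : Fin k, stdVec (Fin.castLE hkm.le q) (⟨k, hkm⟩ : Fin m) = 0 := by
    intro q
    simp only [stdVec, Fin.ext_iff, Fin.coe_castLE]
    rw [if_neg (by have := q.isLt; omega)]
  have hTk : ∃ y z, T ⟨k, hkm⟩ y z ≠ 0 := by
    by_contra hc
    push_neg at hc
    have h0 : (fun (j l : Fin m) => ∑ i, stdVec (⟨k, hkm⟩ : Fin m) i * T i j l)
        = (fun (j l : Fin m) => ∑ i, (0 : Fin m → ℂ) i * T i j l) := by
      funext j l
      simp only [stdVec, ite_mul, one_mul, zero_mul, Pi.zero_apply]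
      rw [Finset.sum_ite_eq' Finset.univ (⟨k, hkm⟩ : Fin m) (fun i => T i j l)]
      simp [hc j l]
    have h1 := hA h0
    have h2 := congrFun h1 ⟨k, hkm⟩
    simp [stdVec] at h2
  rw [Fintype.linearIndependent_iff]
  intro g hg
  have hg0 : g (Sum.inr ()) = 0 := by
    obtain ⟨y, z, hyz⟩ := hTk
    have h := congrFun (congrFun (congrFun hg ⟨k, hkm⟩) y) z
    simp only [Finset.sum_apply, Pi.smul_apply, smul_eq_mul, Pi.zero_apply,
      Fintype.sum_sum_type, wfam, hzk, zero_mul, mul_zero, Finset.sum_const_zero,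
      zero_add, Finset.univ_unique, Finset.sum_singleton] at h
    rcases mul_eq_zero.mp h with h' | h'
    · exact h'
    · exact absurd h' hyz
  intro p
  rcases p with q0 | u
  swap
  · cases u; exact hg0
  · have h := congrFun (congrFun (congrFun hg (Fin.castLE hkm.le q0.1))
      (Fin.castLE hkm.le q0.2.1)) (Fin.castLE hkm.le q0.2.2)
    simp only [Finset.sum_apply, Pi.smul_apply, smul_eq_mul, Pi.zero_apply,
      Fintype.sum_sum_type, wfam, Finset.univ_unique, Finset.sum_singleton, hg0,
      zero_mul, add_zero] at h
    have hz : ∀ q ∈ Finset.univ, q ≠ q0 →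
        g (Sum.inl q) * (stdVec (Fin.castLE hkm.le q.1) (Fin.castLE hkm.le q0.1) *
          stdVec (Fin.castLE hkm.le q.2.1) (Fin.castLE hkm.le q0.2.1) *
          stdVec (Fin.castLE hkm.le q.2.2) (Fin.castLE hkm.le q0.2.2)) = 0 := by
      intro q _ hq
      apply mul_eq_zero_of_right
      by_cases a : Fin.castLE hkm.le q0.1 = Fin.castLE hkm.le q.1
      · by_cases b : Fin.castLE hkm.le q0.2.1 = Fin.castLE hkm.le q.2.1
        · by_cases c : Fin.castLE hkm.le q0.2.2 = Fin.castLE hkm.le q.2.2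
          · exfalso
            apply hq
            have a' := Fin.castLE_injective _ a
            have b' := Fin.castLE_injective _ b
            have c' := Fin.castLE_injective _ c
            exact Prod.ext a'.symm (Prod.ext b'.symm c'.symm)
          · simp [stdVec, c]
        · simp [stdVec, b]
      · simp [stdVec, a]
    rw [Finset.sum_eq_single_of_mem q0 (Finset.mem_univ q0) hz] at h
    simpa [e0] using h

lemma part4 {m k : ℕ} (hkm : k < m) (T : Fin m → Fin m → Fin m → ℂ)
    (hA : Function.Injective fun (α : Fin m → ℂ) (j l : Fin m) => ∑ i, α i * T i j l) :
    Module.finrank ℂ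
        (Submodule.span ℂ
          ({U | ∃ i j l : Fin m, (i : ℕ) < k ∧ (j : ℕ) < k ∧ (l : ℕ) < k ∧
              U = fun x y z => stdVec i x * stdVec j y * stdVec l z} ∪ {T})) = k ^ 3 + 1 := by
  classical
  have hsetr : ({U | ∃ i j l : Fin m, (i : ℕ) < k ∧ (j : ℕ) < k ∧ (l : ℕ) < k ∧
      U = fun x y z => stdVec i x * stdVec j y * stdVec l z} ∪ {T} : Set _)
      = Set.range (wfam hkm.le T) := by
    ext U
    constructor
    · rintro (⟨i, j, l, hi, hj, hl, rfl⟩ | rfl)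
      · exact ⟨Sum.inl (⟨(i : ℕ), hi⟩, ⟨(j : ℕ), hj⟩, ⟨(l : ℕ), hl⟩), rfl⟩
      · exact ⟨Sum.inr (), rfl⟩
    · rintro ⟨p, rfl⟩
      rcases p with q | u
      · left
        exact ⟨Fin.castLE hkm.le q.1, Fin.castLE hkm.le q.2.1, Fin.castLE hkm.le q.2.2,
          by simpa using q.1.isLt, by simpa using q.2.1.isLt, by simpa using q.2.2.isLt, rfl⟩
      · right; rfl
  rw [hsetr, finrank_span_eq_card (wfam_li hkm T hA)]
  simp only [Fintype.card_sum, Fintype.card_prod, Fintype.card_fin, Fintype.card_unit]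
  ring


def phi1 {m : ℕ} (k t t' : ℕ) (hk0 : 0 < k) (hkm : k ≤ m) (ht'm : t' ≤ m) (htm : t ≤ m) :
    (({p : Fin k × Fin k // p.1 ≤ p.2} × Fin k) ⊕
      ((Fin (t' - k) × Fin k) ⊕
        ({p : Fin (t' - k) × Fin (t' - k) // p.1 ≤ p.2} ⊕ Fin (t - k)))) →
      Fin m × Fin m × Fin m
  | .inl q => (Fin.castLE hkm q.1.1.1, Fin.castLE hkm q.1.1.2, Fin.castLE hkm q.2)
  | .inr (.inl q) => (Fin.castLE hkm q.2, ⟨k + q.1, by have := q.1.isLt; omega⟩,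
      ⟨0, by omega⟩)
  | .inr (.inr (.inl q)) => (⟨k + q.1.1, by have := q.1.1.isLt; omega⟩,
      ⟨k + q.1.2, by have := q.1.2.isLt; omega⟩, ⟨0, by omega⟩)
  | .inr (.inr (.inr a)) => (⟨0, by omega⟩, ⟨0, by omega⟩,
      ⟨k + a, by have := a.isLt; omega⟩)

lemma phi1_inj {m : ℕ} (k t t' : ℕ) (hk0 : 0 < k) (hkm : k ≤ m) (ht'm : t' ≤ m)
    (htm : t ≤ m) : Function.Injective (phi1 (m := m) k t t' hk0 hkm ht'm htm) := by
  rintro (q1 | (q2 | (q3 | q4))) (q1' | (q2' | (q3' | q4'))) h <;>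
    simp only [phi1, Prod.mk.injEq, Fin.ext_iff, Fin.coe_castLE] at h <;>
    first
      | (exfalso; omega)
      | (simp only [Sum.inl.injEq, Sum.inr.injEq, Prod.ext_iff, Subtype.ext_iff,
          Fin.ext_iff]; omega)

lemma phi1_le {m : ℕ} (k t t' : ℕ) (hk0 : 0 < k) (hkm : k ≤ m) (ht'm : t' ≤ m)
    (htm : t ≤ m) (p) :
    (((phi1 (m := m) k t t' hk0 hkm ht'm htm p).1 : ℕ) ≤
      ((phi1 (m := m) k t t' hk0 hkm ht'm htm p).2.1 : ℕ)) := by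
  rcases p with q1 | (q2 | (q3 | q4))
  · have hij := q1.1.2
    simp only [Fin.le_def] at hij
    simp only [phi1, Fin.coe_castLE]
    omega
  · simp only [phi1, Fin.coe_castLE]
    have := q2.2.isLt
    omega
  · have hab := q3.1.2
    have hab' := q3.2; simp only [Fin.le_def] at hab'
    simp only [phi1]
    omega
  · simp only [phi1]
    omega


lemma part1 {m k t t' : ℕ} (hk3 : 3 ≤ k) (hkk : k * k ≤ m)
    (ht : t = k + (m - k * k + 1) / 2) (ht' : t' = k + (m - k * k) / 2)
    (E : Submodule ℂ (Fin m → Fin m → ℂ)) (hE : Eprime m k t t' ≤ E) :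
    Nat.choose (k + 1) 2 * k + (t' - k) * k + Nat.choose (t' - k + 1) 2 + (t - k) ≤
      Module.finrank ℂ ↥(LinearMap.ker (skewSym (m := m)) ⊓ leftTensor E) := by
  classical
  have hk0 : 0 < k := by omega
  have hkq : k ≤ k * k := Nat.le_mul_of_pos_left k hk0
  have hkm : k ≤ m := hkq.trans hkk
  have ht'm : t' ≤ m := by omega
  have htm : t ≤ m := by omega
  have hmem : ∀ p, symEl (phi1 (m := m) k t t' hk0 hkm ht'm htm p) ∈
      LinearMap.ker (skewSym (m := m)) ⊓ leftTensor E := by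
    intro p
    refine Submodule.mem_inf.mpr ⟨symEl_mem_ker _, ?_⟩
    rcases p with q1 | (q2 | (q3 | q4))
    · exact symEl_mem_leftTensor
        (hE (mem_Eprime (Or.inl ⟨by simp only [phi1, Fin.coe_castLE]; exact q1.1.1.2.isLt,
          by simp only [phi1, Fin.coe_castLE]; exact q1.2.isLt⟩)))
        (hE (mem_Eprime (Or.inl ⟨by simp only [phi1, Fin.coe_castLE]; exact q1.1.1.1.isLt,
          by simp only [phi1, Fin.coe_castLE]; exact q1.2.isLt⟩)))
    · exact symEl_mem_leftTensor
        (hE (mem_Eprime (Or.inr (Or.inl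
          ⟨by simp only [phi1]; omega,
           by simp only [phi1]; have := q2.1.isLt; omega,
           by simp only [phi1]⟩))))
        (hE (mem_Eprime (Or.inl ⟨by simp only [phi1, Fin.coe_castLE]; exact q2.2.isLt,
          by simp only [phi1]; omega⟩)))
    · exact symEl_mem_leftTensor
        (hE (mem_Eprime (Or.inr (Or.inl
          ⟨by simp only [phi1]; omega,
           by simp only [phi1]; have := q3.1.2.isLt; omega,
           by simp only [phi1]⟩))))
        (hE (mem_Eprime (Or.inr (Or.inl
          ⟨by simp only [phi1]; omega,
           by simp only [phi1]; have := q3.1.1.isLt; omega,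
           by simp only [phi1]⟩))))
    · exact symEl_mem_leftTensor
        (hE (mem_Eprime (Or.inr (Or.inr
          ⟨by simp only [phi1],
           by simp only [phi1]; omega,
           by simp only [phi1]; have := q4.isLt; omega⟩))))
        (hE (mem_Eprime (Or.inr (Or.inr
          ⟨by simp only [phi1],
           by simp only [phi1]; omega,
           by simp only [phi1]; have := q4.isLt; omega⟩))))
  have hc := card_le_finrank
    (symEl_li _ (phi1_inj (m := m) k t t' hk0 hkm ht'm htm)
      (phi1_le (m := m) k t t' hk0 hkm ht'm htm)) hmem
  refine le_trans ?_ hc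
  simp only [Fintype.card_sum, Fintype.card_prod, Fintype.card_fin, card_pairs]
  omega

lemma arith2 {m k t t' : ℕ} (hm : 9 ≤ m) (hm10 : m ≠ 10) (hk : k = Nat.sqrt m)
    (ht : t = k + (m - k ^ 2 + 1) / 2) (ht' : t' = k + (m - k ^ 2) / 2) :
    2 * m ≤ Nat.choose (k + 1) 2 * k + (t' - k) * k + Nat.choose (t' - k + 1) 2 + (t - k) := by
  have hk3 : 3 ≤ k := by rw [hk]; exact Nat.le_sqrt.mpr (by omega)
  have hkk : k * k ≤ m := by rw [hk]; exact Nat.sqrt_le m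
  have hp : k ^ 2 = k * k := by ring
  rw [hp] at ht ht'
  set q := (m - k * k) / 2 with hq
  have htk' : t' - k = q := by omega
  set r := (m - k * k) % 2 with hr
  have htk : t - k = q + r := by omega
  rw [htk', htk]
  have hc1 : 2 * ((k+1).choose 2 * k) = k * (k * k) + k * k := by
    rw [show 2 * ((k+1).choose 2 * k) = (2 * (k+1).choose 2) * k from by ring,
      two_mul_choose_two]; ring
  have hc2 : 2 * (q+1).choose 2 = q * q + q := by
    rw [two_mul_choose_two]; ring
  rcases Nat.lt_or_ge k 4 with h4 | h4
  · have hk3' : k = 3 := by omega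
    subst hk3'
    have hqq : q ≤ q * q := by
      rcases Nat.eq_zero_or_pos q with h | h
      · simp [h]
      · exact Nat.le_mul_of_pos_left q h
    have hch : ((3:ℕ)+1).choose 2 = 6 := by decide
    rw [hch]
    set D := q * q with hD
    set G := (q+1).choose 2 with hG
    omega
  · have f1 : 4 * (k * k) ≤ k * (k * k) := Nat.mul_le_mul_right _ h4
    have f2 : 4 * q ≤ q * k := by
      calc 4 * q = q * 4 := by ring
        _ ≤ q * k := Nat.mul_le_mul_left q h4
    have f3 : 16 ≤ k * k := Nat.mul_le_mul h4 h4
    set A := k * k with hA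
    set B := k * A with hB
    set C := q * k with hC
    set D := q * q with hD
    set F := (k+1).choose 2 * k with hF
    set G := (q+1).choose 2 with hG
    omega


lemma arith5 {m k : ℕ} (hm : 9 ≤ m) (hm15 : m ≠ 15) (hk : k = Nat.sqrt m) :
    2 * m ≤ k ^ 3 + 1 := by
  have hk3 : 3 ≤ k := by rw [hk]; exact Nat.le_sqrt.mpr (by omega)
  have hkk : k * k ≤ m := by rw [hk]; exact Nat.sqrt_le m
  have hlt : m < k * k + 2 * k + 1 := by
    have h := Nat.lt_succ_sqrt m
    rw [← hk] at h
    calc m < (k + 1) * (k + 1) := by simpa [Nat.succ_eq_add_one] using h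
      _ = k * k + 2 * k + 1 := by ring
  have hpow : k ^ 3 = k * (k * k) := by ring
  rw [hpow]
  rcases Nat.lt_or_ge k 4 with h4 | h4
  · have hk3' : k = 3 := by omega
    subst hk3'
    omega
  · have f1 : 4 * (k * k) ≤ k * (k * k) := Nat.mul_le_mul_right _ h4
    have f4 : 2 * k ≤ k * k := Nat.mul_le_mul_right k (by omega)
    set A := k * k with hA
    set B := k * A with hB
    omega

end DegAux

/-- For `m ≥ 9`, `m ≠ 10, 15`, any concise tensor `T ∈ ℂᵐ ⊗ ℂᵐ ⊗ ℂᵐ`, and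
`r = 2m`, `k = ⌊√m⌋`, `t = k + ⌈(m−k²)/2⌉`, `t' = k + ⌊(m−k²)/2⌋`, with
`E_{110} = T(C*) + E'_{110}` (and symmetrically `E_{101}`, `E_{011}`):
(i) `dim((E_{110} ⊗ A) ∩ (S²A ⊗ B)) ≥ C(k+1,2)·k + (t'−k)·k + C(t'−k+1,2) + (t−k) ≥ 2m`;
(ii) the triple intersection `(E_{110}⊗C) ∩ (E_{101}⊗B) ∩ (E_{011}⊗A)` contains
`⟨a_1,…,a_k⟩⊗⟨b_1,…,b_k⟩⊗⟨c_1,…,c_k⟩ ⊕ ⟨T⟩`, of dimension `k³ + 1 ≥ 2m`. -/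
theorem degree_three_tests_passed {m : ℕ} (hm : 9 ≤ m) (hm10 : m ≠ 10) (hm15 : m ≠ 15)
    (T : Fin m → Fin m → Fin m → ℂ)
    (hA : Function.Injective fun (α : Fin m → ℂ) (j k : Fin m) => ∑ i, α i * T i j k)
    (hB : Function.Injective fun (β : Fin m → ℂ) (i k : Fin m) => ∑ j, β j * T i j k)
    (hC : Function.Injective fun (γ : Fin m → ℂ) (i j : Fin m) => ∑ k, γ k * T i j k)
    (k t t' : ℕ) (hk : k = Nat.sqrt m)
    (ht : t = k + (m - k ^ 2 + 1) / 2) (ht' : t' = k + (m - k ^ 2) / 2) :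
    (Nat.choose (k + 1) 2 * k + (t' - k) * k + Nat.choose (t' - k + 1) 2 + (t - k) ≤
        Module.finrank ℂ
          ↥(LinearMap.ker (skewSym (m := m)) ⊓
              leftTensor (imageThird T ⊔ Eprime m k t t'))) ∧
    (2 * m ≤
      Nat.choose (k + 1) 2 * k + (t' - k) * k + Nat.choose (t' - k + 1) 2 + (t - k)) ∧
    (Submodule.span ℂ
        ({U | ∃ i j l : Fin m, (i : ℕ) < k ∧ (j : ℕ) < k ∧ (l : ℕ) < k ∧
            U = fun x y z => stdVec i x * stdVec j y * stdVec l z} ∪ {T}) ≤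
      tensorThird (imageThird T ⊔ Eprime m k t t') ⊓
        tensorSecond (imageSecond T ⊔ Eprime m k t t') ⊓
        tensorFirst (imageFirst T ⊔ Eprime m k t t')) ∧
    (Module.finrank ℂ
        ↥(Submodule.span ℂ
          ({U | ∃ i j l : Fin m, (i : ℕ) < k ∧ (j : ℕ) < k ∧ (l : ℕ) < k ∧
              U = fun x y z => stdVec i x * stdVec j y * stdVec l z} ∪ {T})) =
      k ^ 3 + 1) ∧
    (2 * m ≤ k ^ 3 + 1) := by
  have hk3 : 3 ≤ k := by rw [hk]; exact Nat.le_sqrt.mpr (by omega)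
  have hkk : k * k ≤ m := by rw [hk]; exact Nat.sqrt_le m
  have hp : k ^ 2 = k * k := by ring
  have hkm : k < m := by
    have h3k : 3 * k ≤ k * k := Nat.mul_le_mul_right k hk3
    omega
  refine ⟨?_, ?_, ?_, ?_, ?_⟩
  · exact DegAux.part1 hk3 hkk (by rw [ht, hp]) (by rw [ht', hp]) _ le_sup_right
  · exact DegAux.arith2 hm hm10 hk ht ht'
  · exact DegAux.part3 (by omega) T
  · exact DegAux.part4 hkm T hA
  · exact DegAux.arith5 hm hm15 hk
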